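/- Best rank-r approximation solves the nearest Kronecker product problem: if R(A) = UΣVᵀ is an SVD of the Van Loan rearrangement of A, and A_j, B_j are defined by vec(A_j) = √σ_j u_j and vec(B_j) = √σ_j v_j, then ∑_{j=1}^r A_j ⊗ B_j minimizes ‖A − ∑_{j=1}^r X_j ⊗ Y_j‖_F over all choices of r matrices X_j ∈ ℝ^{m₁×n₁}, Y_j ∈ ℝ^{m₂×n₂}, with minimum value (∑_{j>r} σ_j²)^{1/2}. -/

import Mathlib

set_option maxHeartbeats 1000000
open scoped RealInnerProductSpace

lemma sum_contract {ι : Type*} [Fintype ι] {N : ℕ} (v : Fin N → ι → ℝ)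
    (hv : ∀ i j, ∑ x, v i x * v j x = if i = j then 1 else 0)
    (c : Fin N → Fin N → ℝ) :
    ∑ q, ∑ j, ∑ k, v j q * v k q * c j k = ∑ j, c j j := by
  rw [Finset.sum_comm]
  have h1 : ∀ j : Fin N, ∑ q, ∑ k, v j q * v k q * c j k
      = ∑ k, (∑ q, v j q * v k q) * c j k := by
    intro j
    rw [Finset.sum_comm]
    exact Finset.sum_congr rfl fun k _ => by rw [Finset.sum_mul]
  simp_rw [h1, hv]
  simp

lemma norm_sq_comb {E : Type*} [NormedAddCommGroup E] [InnerProductSpace ℝ E]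
    {N : ℕ} (a : Fin N → ℝ) (w : Fin N → E) :
    ‖∑ j, a j • w j‖ ^ 2 = ∑ j, ∑ k, a j * a k * ⟪w j, w k⟫ := by
  rw [← real_inner_self_eq_norm_sq, sum_inner]
  refine Finset.sum_congr rfl fun j _ => ?_
  rw [inner_sum]
  refine Finset.sum_congr rfl fun k _ => ?_
  rw [real_inner_smul_left, real_inner_smul_right]; ring

lemma eucl_norm_sq {ι : Type*} [Fintype ι] (z : EuclideanSpace ℝ ι) :
    ‖z‖ ^ 2 = ∑ p, z p ^ 2 := by
  rw [EuclideanSpace.norm_eq, Real.sq_sqrt (by positivity)]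
  simp [sq_abs]

lemma eucl_inner {ι : Type*} [Fintype ι] (a b : EuclideanSpace ℝ ι) :
    ⟪a, b⟫ = ∑ p, a p * b p := by
  simp [PiLp.inner_apply, RCLike.inner_apply, conj_trivial, mul_comm]

lemma sum_ite_lt (N r : ℕ) (h : r ≤ N) :
    ∑ j : Fin N, (if (j : ℕ) < r then (1 : ℝ) else 0) = r := by
  induction N with
  | zero =>
      obtain rfl : r = 0 := Nat.le_zero.mp h
      simp
  | succ n ih =>
      rcases Nat.lt_or_ge r (n + 1) with hr | hr
      · rw [Fin.sum_univ_castSucc]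
        have := ih (by omega)
        simp only [Fin.coe_castSucc, Fin.val_last] at *
        rw [this, if_neg (by omega), add_zero]
      · obtain rfl : r = n + 1 := le_antisymm h hr
        have : ∀ j : Fin (n + 1), (if (j : ℕ) < n + 1 then (1 : ℝ) else 0) = 1 := by
          intro j; rw [if_pos j.is_lt]
        rw [Finset.sum_congr rfl fun j _ => this j]
        simp

/-- Final arithmetic step. -/
lemma final_arith {N r : ℕ} (σ : Fin N → ℝ) (t : Fin N → ℝ)
    (hσ : ∀ j, 0 ≤ σ j) (hσmono : ∀ i j : Fin N, i ≤ j → σ j ≤ σ i)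
    (ht0 : ∀ j, 0 ≤ t j) (ht1 : ∀ j, t j ≤ 1) (htsum : ∑ j, t j ≤ (r : ℝ)) :
    (∑ j : Fin N, if r ≤ (j : ℕ) then σ j ^ 2 else 0)
      ≤ ∑ j : Fin N, (σ j ^ 2 - σ j ^ 2 * t j) := by
  rcases Nat.lt_or_ge r N with hrN | hrN
  · set jr : Fin N := ⟨r, hrN⟩ with hjr
    set ρ : ℝ := σ jr ^ 2 with hρ
    have hρ0 : 0 ≤ ρ := sq_nonneg _
    have hkey : ∀ j : Fin N,
        (if r ≤ (j : ℕ) then σ j ^ 2 else 0)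
          ≤ σ j ^ 2 - σ j ^ 2 * t j - (if (j : ℕ) < r then ρ * (1 - t j) else - (ρ * t j)) := by
      intro j
      by_cases hj : (j : ℕ) < r
      · rw [if_neg (by omega), if_pos hj]
        have hle : ρ ≤ σ j ^ 2 := by
          have h1 : σ jr ≤ σ j := hσmono j jr (by simp [hjr, Fin.le_def]; omega)
          have h0 := hσ jr
          nlinarith
        nlinarith [ht0 j, ht1 j]
      · rw [if_pos (by omega), if_neg hj]
        have hle : σ j ^ 2 ≤ ρ := by
          have h1 : σ j ≤ σ jr := hσmono jr j (by simp [hjr, Fin.le_def]; omega)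
          have h0 := hσ j
          nlinarith
        nlinarith [ht0 j, ht1 j]
    have hrest : 0 ≤ ∑ j : Fin N, (if (j : ℕ) < r then ρ * (1 - t j) else - (ρ * t j)) := by
      have hexp : ∀ j : Fin N, (if (j : ℕ) < r then ρ * (1 - t j) else - (ρ * t j))
          = ρ * (if (j : ℕ) < r then (1:ℝ) else 0) - ρ * t j := by
        intro j; by_cases hj : (j : ℕ) < r <;> simp [hj] <;> ring
      simp_rw [hexp]
      rw [Finset.sum_sub_distrib, ← Finset.mul_sum, ← Finset.mul_sum,
        sum_ite_lt N r (Nat.le_of_lt hrN)]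
      have : ρ * ∑ j, t j ≤ ρ * (r : ℝ) := mul_le_mul_of_nonneg_left htsum hρ0
      linarith
    calc ∑ j : Fin N, (if r ≤ (j : ℕ) then σ j ^ 2 else 0)
        ≤ ∑ j : Fin N, (σ j ^ 2 - σ j ^ 2 * t j
            - (if (j : ℕ) < r then ρ * (1 - t j) else - (ρ * t j))) :=
          Finset.sum_le_sum fun j _ => hkey j
      _ ≤ ∑ j : Fin N, (σ j ^ 2 - σ j ^ 2 * t j) := by
          rw [Finset.sum_sub_distrib]
          linarith [hrest]
  · have hz : ∀ j : Fin N, (if r ≤ (j : ℕ) then σ j ^ 2 else 0) = 0 := by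
      intro j; rw [if_neg (by omega)]
    rw [Finset.sum_congr rfl fun j _ => hz j]
    rw [Finset.sum_const, smul_zero]
    refine Finset.sum_nonneg fun j _ => ?_
    nlinarith [sq_nonneg (σ j), ht1 j]

/-- Core Eckart–Young-type inequality in coordinates. -/
lemma core_ineq {ι₁ ι₂ : Type*} [Fintype ι₁] [Fintype ι₂] {N r : ℕ}
    (σ : Fin N → ℝ) (u : Fin N → EuclideanSpace ℝ ι₁) (v : Fin N → ι₂ → ℝ)
    (hσ : ∀ j, 0 ≤ σ j) (hu : Orthonormal ℝ u)
    (hv : ∀ i j, ∑ q, v i q * v j q = if i = j then 1 else 0)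
    (hσmono : ∀ i j : Fin N, i ≤ j → σ j ≤ σ i)
    (x : Fin r → EuclideanSpace ℝ ι₁) (y : Fin r → ι₂ → ℝ) :
    (∑ j : Fin N, if r ≤ (j : ℕ) then σ j ^ 2 else 0) ≤
      ∑ q : ι₂, ‖(∑ j, (σ j * v j q) • u j) - ∑ k, y k q • x k‖ ^ 2 := by
  classical
  set W : Submodule ℝ (EuclideanSpace ℝ ι₁) := Submodule.span ℝ (Set.range x) with hW
  haveI : FiniteDimensional ℝ W := FiniteDimensional.span_of_finite ℝ (Set.finite_range x)
  set P := W.orthogonalProjectionOnto with hP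
  set M : ι₂ → EuclideanSpace ℝ ι₁ := fun q => ∑ j, (σ j * v j q) • u j with hM
  set B : ι₂ → EuclideanSpace ℝ ι₁ := fun q => ∑ k, y k q • x k with hB
  have hBW : ∀ q, B q ∈ W := fun q =>
    Submodule.sum_mem _ fun k _ => Submodule.smul_mem _ _
      (Submodule.subset_span (Set.mem_range_self k))
  -- Pythagoras splitting
  have hsplit : ∀ a : EuclideanSpace ℝ ι₁,
      ‖a‖ ^ 2 = ‖(P a : EuclideanSpace ℝ ι₁)‖ ^ 2 + ‖a - P a‖ ^ 2 := by
    intro a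
    have hmem : a - P a ∈ Wᗮ := Submodule.sub_starProjection_mem_orthogonal (K := W) a
    have hd : a = (P a : EuclideanSpace ℝ ι₁) + (a - P a) := by abel
    nth_rewrite 1 [hd]
    rw [norm_add_sq_real]
    have hz : ⟪(P a : EuclideanSpace ℝ ι₁), a - P a⟫ = 0 := hmem _ (P a).2
    rw [hz]; ring
  -- pointwise lower bound
  have hpyth : ∀ q, ‖M q‖ ^ 2 - ‖(P (M q) : EuclideanSpace ℝ ι₁)‖ ^ 2 ≤ ‖M q - B q‖ ^ 2 := by
    intro q
    have hmem : M q - P (M q) ∈ Wᗮ := Submodule.sub_starProjection_mem_orthogonal (K := W) (M q)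
    have h1 : ‖M q - B q‖ ^ 2
        = ‖((P (M q) : EuclideanSpace ℝ ι₁) - B q)‖ ^ 2 + ‖M q - P (M q)‖ ^ 2 := by
      have hd : M q - B q = ((P (M q) : EuclideanSpace ℝ ι₁) - B q) + (M q - P (M q)) := by
        abel
      rw [hd, norm_add_sq_real]
      have hz : ⟪((P (M q) : EuclideanSpace ℝ ι₁) - B q), M q - P (M q)⟫ = 0 := by
        refine hmem _ (Submodule.sub_mem _ ?_ (hBW q))
        exact (P (M q)).2
      rw [hz]; ring
    rw [h1, hsplit (M q)]
    nlinarith [sq_nonneg ‖((P (M q) : EuclideanSpace ℝ ι₁) - B q)‖]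
  -- sum of ‖M q‖²
  have hite : ∀ j k : Fin N, ⟪u j, u k⟫ = if j = k then (1:ℝ) else 0 :=
    fun j k => by rw [orthonormal_iff_ite.mp hu]
  have hMsum : ∑ q, ‖M q‖ ^ 2 = ∑ j, σ j ^ 2 := by
    have : ∀ q, ‖M q‖ ^ 2 = ∑ j, ∑ k, v j q * v k q * (σ j * σ k * ⟪u j, u k⟫) := by
      intro q
      rw [hM, norm_sq_comb]
      exact Finset.sum_congr rfl fun j _ => Finset.sum_congr rfl fun k _ => by ring
    simp_rw [this]
    rw [sum_contract v hv]
    refine Finset.sum_congr rfl fun j _ => ?_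
    rw [hite j j, if_pos rfl]; ring
  -- sum of ‖P (M q)‖²
  have hPMsum : ∑ q, ‖(P (M q) : EuclideanSpace ℝ ι₁)‖ ^ 2
      = ∑ j, σ j ^ 2 * ‖(P (u j) : EuclideanSpace ℝ ι₁)‖ ^ 2 := by
    have hPM : ∀ q, (P (M q) : EuclideanSpace ℝ ι₁)
        = ∑ j, (σ j * v j q) • (P (u j) : EuclideanSpace ℝ ι₁) := by
      intro q
      rw [hM, map_sum]
      push_cast [Submodule.coe_sum]
      exact Finset.sum_congr rfl fun j _ => by rw [map_smul]; rfl
    have : ∀ q, ‖(P (M q) : EuclideanSpace ℝ ι₁)‖ ^ 2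
        = ∑ j, ∑ k, v j q * v k q *
            (σ j * σ k * ⟪(P (u j) : EuclideanSpace ℝ ι₁), (P (u k) : EuclideanSpace ℝ ι₁)⟫) := by
      intro q
      rw [hPM q, norm_sq_comb]
      exact Finset.sum_congr rfl fun j _ => Finset.sum_congr rfl fun k _ => by ring
    simp_rw [this]
    rw [sum_contract v hv]
    refine Finset.sum_congr rfl fun j _ => ?_
    rw [real_inner_self_eq_norm_sq]; ring
  -- t j bounds
  set t : Fin N → ℝ := fun j => ‖(P (u j) : EuclideanSpace ℝ ι₁)‖ ^ 2 with ht
  have ht0 : ∀ j, 0 ≤ t j := fun j => sq_nonneg _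
  have ht1 : ∀ j, t j ≤ 1 := by
    intro j
    have h1 := hsplit (u j)
    have hn : ‖u j‖ = 1 := hu.1 j
    rw [hn, one_pow] at h1
    have h2 : (0:ℝ) ≤ ‖u j - (P (u j) : EuclideanSpace ℝ ι₁)‖ ^ 2 := sq_nonneg _
    simp only [ht]
    linarith
  have htsum : ∑ j, t j ≤ (r : ℝ) := by
    set b := stdOrthonormalBasis ℝ W with hb
    have hpar : ∀ j, t j = ∑ i, ⟪((b i : W) : EuclideanSpace ℝ ι₁), u j⟫ ^ 2 := by
      intro j
      have h1 : t j = ⟪P (u j), P (u j)⟫ := (real_inner_self_eq_norm_sq _).symm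
      rw [h1, ← b.sum_inner_mul_inner (P (u j)) (P (u j))]
      refine Finset.sum_congr rfl fun i _ => ?_
      have hmem : u j - P (u j) ∈ Wᗮ := Submodule.sub_starProjection_mem_orthogonal (K := W) (u j)
      have hzz : ⟪((b i : W) : EuclideanSpace ℝ ι₁), u j - P (u j)⟫ = 0 :=
        hmem _ (b i).2
      have key : ⟪(b i : W), P (u j)⟫ = ⟪((b i : W) : EuclideanSpace ℝ ι₁), u j⟫ := by
        rw [Submodule.coe_inner]
        have := inner_sub_right (𝕜 := ℝ) ((b i : W) : EuclideanSpace ℝ ι₁) (u j) (P (u j))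
        rw [hzz] at this
        linarith [this]
      have key2 : ⟪P (u j), (b i : W)⟫ = ⟪((b i : W) : EuclideanSpace ℝ ι₁), u j⟫ := by
        rw [real_inner_comm]; exact key
      rw [key, key2, sq]
    have hbessel : ∀ i, ∑ j, ⟪((b i : W) : EuclideanSpace ℝ ι₁), u j⟫ ^ 2 ≤ 1 := by
      intro i
      have h1 : ∑ j : Fin N, ‖⟪u j, ((b i : W) : EuclideanSpace ℝ ι₁)⟫‖ ^ 2
          ≤ ‖((b i : W) : EuclideanSpace ℝ ι₁)‖ ^ 2 := hu.sum_inner_products_le _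
      have hn : ‖((b i : W) : EuclideanSpace ℝ ι₁)‖ = 1 := by
        rw [Submodule.norm_coe]
        exact b.orthonormal.1 i
      rw [hn] at h1
      calc ∑ j, ⟪((b i : W) : EuclideanSpace ℝ ι₁), u j⟫ ^ 2
          = ∑ j : Fin N, ‖⟪u j, ((b i : W) : EuclideanSpace ℝ ι₁)⟫‖ ^ 2 := by
            refine Finset.sum_congr rfl fun j _ => ?_
            rw [Real.norm_eq_abs, sq_abs, real_inner_comm]
        _ ≤ 1 := by simpa using h1
    have hdim : (Module.finrank ℝ W : ℝ) ≤ (r : ℝ) := by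
      have := finrank_range_le_card (R := ℝ) x
      simp only [Fintype.card_fin] at this
      exact_mod_cast this
    calc ∑ j, t j = ∑ j, ∑ i, ⟪((b i : W) : EuclideanSpace ℝ ι₁), u j⟫ ^ 2 := by
          exact Finset.sum_congr rfl fun j _ => hpar j
      _ = ∑ i, ∑ j, ⟪((b i : W) : EuclideanSpace ℝ ι₁), u j⟫ ^ 2 := Finset.sum_comm
      _ ≤ ∑ _i : Fin (Module.finrank ℝ W), (1:ℝ) := Finset.sum_le_sum fun i _ => hbessel i
      _ = (Module.finrank ℝ W : ℝ) := by simp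
      _ ≤ (r : ℝ) := hdim
  -- final arithmetic
  have hlow : ∑ j, σ j ^ 2 - ∑ j, σ j ^ 2 * t j ≤ ∑ q, ‖M q - B q‖ ^ 2 := by
    rw [← hMsum, ← hPMsum, ← Finset.sum_sub_distrib]
    exact Finset.sum_le_sum fun q _ => hpyth q
  calc (∑ j : Fin N, if r ≤ (j : ℕ) then σ j ^ 2 else 0)
      ≤ ∑ j, (σ j ^ 2 - σ j ^ 2 * t j) := final_arith σ t hσ hσmono ht0 ht1 htsum
    _ = ∑ j, σ j ^ 2 - ∑ j, σ j ^ 2 * t j := Finset.sum_sub_distrib _ _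
    _ ≤ ∑ q, ‖M q - B q‖ ^ 2 := hlow

/-- Expansion of the Frobenius norm of a sum of outer products. -/
lemma frob_expand {ι₁ ι₂ : Type*} [Fintype ι₁] [Fintype ι₂] {N : ℕ}
    (u : Fin N → ι₁ → ℝ) (v : Fin N → ι₂ → ℝ) (c : Fin N → ℝ)
    (hu : ∀ i j, ∑ x, u i x * u j x = if i = j then 1 else 0)
    (hv : ∀ i j, ∑ x, v i x * v j x = if i = j then 1 else 0) :
    ∑ x, ∑ y, (∑ j, c j * (u j x * v j y)) ^ 2 = ∑ j, (c j) ^ 2 := by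
  have key : ∀ (x : ι₁) (y : ι₂), (∑ j, c j * (u j x * v j y)) ^ 2
      = ∑ j, ∑ k, u j x * u k x * (v j y * v k y * (c j * c k)) := by
    intro x y
    rw [sq, Finset.sum_mul_sum]
    exact Finset.sum_congr rfl fun j _ => Finset.sum_congr rfl fun k _ => by ring
  simp_rw [key]
  rw [Finset.sum_comm]
  calc ∑ y : ι₂, ∑ x : ι₁, ∑ j, ∑ k, u j x * u k x * (v j y * v k y * (c j * c k))
      = ∑ y : ι₂, ∑ j, v j y * v j y * (c j * c j) :=
        Finset.sum_congr rfl fun y _ => sum_contract u hu _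
    _ = ∑ j, ∑ y : ι₂, v j y * v j y * (c j * c j) := Finset.sum_comm
    _ = ∑ j, (∑ y : ι₂, v j y * v j y) * (c j * c j) :=
        Finset.sum_congr rfl fun j _ => (Finset.sum_mul _ _ _).symm
    _ = ∑ j, (c j) ^ 2 := by
        refine Finset.sum_congr rfl fun j _ => ?_
        rw [hv j j, if_pos rfl, one_mul, sq]

open Matrix
open scoped Kronecker

/-- The Frobenius norm of a real matrix. -/
noncomputable def frob {a b : Type*} [Fintype a] [Fintype b] (M : Matrix a b ℝ) : ℝ :=
  Real.sqrt (∑ i, ∑ j, (M i j) ^ 2)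

/-- Best rank-`r` truncation of the SVD of the Van Loan rearrangement solves the
nearest Kronecker product problem: if `R A = ∑ⱼ σⱼ uⱼ vⱼᵀ` is an SVD of the
rearrangement of `A`, and `vec Aⱼ = √σⱼ uⱼ`, `vec Bⱼ = √σⱼ vⱼ`, then the `r`-term
sum `∑_{j<r} Aⱼ ⊗ₖ Bⱼ` minimizes `‖A − ∑ Xⱼ ⊗ₖ Yⱼ‖_F` over all `r`-term Kronecker
sums, with minimum value `√(∑_{j≥r} σⱼ²)`. -/
theorem ksvd_best_approximation {m₁ n₁ m₂ n₂ N : ℕ}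
    (R : Matrix (Fin m₁ × Fin m₂) (Fin n₁ × Fin n₂) ℝ →ₗ[ℝ]
         Matrix (Fin m₁ × Fin n₁) (Fin m₂ × Fin n₂) ℝ)
    (hiso : ∀ M, frob (R M) = frob M)
    (hkron : ∀ (X : Matrix (Fin m₁) (Fin n₁) ℝ) (Y : Matrix (Fin m₂) (Fin n₂) ℝ),
      R (X ⊗ₖ Y) = Matrix.of fun x y => X x.1 x.2 * Y y.1 y.2)
    (A : Matrix (Fin m₁ × Fin m₂) (Fin n₁ × Fin n₂) ℝ)
    (σ : Fin N → ℝ) (u : Fin N → Fin m₁ × Fin n₁ → ℝ) (v : Fin N → Fin m₂ × Fin n₂ → ℝ)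
    (hσ : ∀ j, 0 ≤ σ j)
    (hu : ∀ i j, ∑ x, u i x * u j x = if i = j then 1 else 0)
    (hv : ∀ i j, ∑ x, v i x * v j x = if i = j then 1 else 0)
    (hσmono : ∀ i j : Fin N, i ≤ j → σ j ≤ σ i)
    (hsvd : R A = ∑ j, σ j • Matrix.of fun x y => u j x * v j y)
    (r : ℕ)
    (As : Fin N → Matrix (Fin m₁) (Fin n₁) ℝ) (Bs : Fin N → Matrix (Fin m₂) (Fin n₂) ℝ)
    (hAs : ∀ (j : Fin N) (x : Fin m₁ × Fin n₁), As j x.1 x.2 = Real.sqrt (σ j) * u j x)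
    (hBs : ∀ (j : Fin N) (y : Fin m₂ × Fin n₂), Bs j y.1 y.2 = Real.sqrt (σ j) * v j y) :
    frob (A - ∑ j : Fin N, if (j : ℕ) < r then (As j) ⊗ₖ (Bs j) else 0) =
        Real.sqrt (∑ j : Fin N, if r ≤ (j : ℕ) then σ j ^ 2 else 0) ∧
    ∀ (Xs : Fin r → Matrix (Fin m₁) (Fin n₁) ℝ) (Ys : Fin r → Matrix (Fin m₂) (Fin n₂) ℝ),
      frob (A - ∑ j : Fin N, if (j : ℕ) < r then (As j) ⊗ₖ (Bs j) else 0) ≤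
        frob (A - ∑ j, (Xs j) ⊗ₖ (Ys j)) := by
  classical
  have hRk : ∀ j : Fin N, R ((As j) ⊗ₖ (Bs j)) = σ j • Matrix.of fun x y => u j x * v j y := by
    intro j
    rw [hkron]
    ext x y
    simp only [Matrix.of_apply, Matrix.smul_apply, smul_eq_mul]
    rw [hAs j x, hBs j y]
    have h := Real.mul_self_sqrt (hσ j)
    calc Real.sqrt (σ j) * u j x * (Real.sqrt (σ j) * v j y)
        = (Real.sqrt (σ j) * Real.sqrt (σ j)) * (u j x * v j y) := by ring
      _ = σ j * (u j x * v j y) := by rw [h]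
  have hentry : ∀ (x : Fin m₁ × Fin n₁) (y : Fin m₂ × Fin n₂),
      (R (A - ∑ j : Fin N, if (j : ℕ) < r then (As j) ⊗ₖ (Bs j) else 0)) x y
        = ∑ j : Fin N, (if r ≤ (j : ℕ) then σ j else 0) * (u j x * v j y) := by
    intro x y
    rw [map_sub, map_sum, hsvd]
    have hterm : ∀ j : Fin N,
        R (if (j : ℕ) < r then (As j) ⊗ₖ (Bs j) else 0)
          = if (j : ℕ) < r then σ j • Matrix.of (fun x y => u j x * v j y) else 0 := by
      intro j
      by_cases hj : (j : ℕ) < r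
      · rw [if_pos hj, if_pos hj, hRk]
      · rw [if_neg hj, if_neg hj, map_zero]
    rw [Finset.sum_congr rfl fun j _ => hterm j]
    rw [Matrix.sub_apply, Matrix.sum_apply, Matrix.sum_apply]
    rw [← Finset.sum_sub_distrib]
    refine Finset.sum_congr rfl fun j _ => ?_
    by_cases hj : (j : ℕ) < r
    · rw [if_pos hj, if_neg (by omega)]
      simp [Matrix.smul_apply]
    · rw [if_neg hj, if_pos (by omega)]
      simp [Matrix.smul_apply]
  have part1 : frob (A - ∑ j : Fin N, if (j : ℕ) < r then (As j) ⊗ₖ (Bs j) else 0)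
      = Real.sqrt (∑ j : Fin N, if r ≤ (j : ℕ) then σ j ^ 2 else 0) := by
    rw [← hiso]
    unfold frob
    congr 1
    calc ∑ x, ∑ y,
          ((R (A - ∑ j : Fin N, if (j : ℕ) < r then (As j) ⊗ₖ (Bs j) else 0)) x y) ^ 2
        = ∑ x, ∑ y, (∑ j : Fin N, (if r ≤ (j : ℕ) then σ j else 0) * (u j x * v j y)) ^ 2 :=
          Finset.sum_congr rfl fun x _ => Finset.sum_congr rfl fun y _ => by rw [hentry]
      _ = ∑ j : Fin N, (if r ≤ (j : ℕ) then σ j else 0) ^ 2 :=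
          frob_expand u v _ hu hv
      _ = ∑ j : Fin N, if r ≤ (j : ℕ) then σ j ^ 2 else 0 := by
          refine Finset.sum_congr rfl fun j _ => ?_
          by_cases hj : r ≤ (j : ℕ)
          · rw [if_pos hj, if_pos hj]
          · rw [if_neg hj, if_neg hj]
            norm_num
  refine ⟨part1, fun Xs Ys => ?_⟩
  rw [part1, ← hiso (A - ∑ k, (Xs k) ⊗ₖ (Ys k))]
  unfold frob
  apply Real.sqrt_le_sqrt
  -- entries of R (A - ∑ Xs ⊗ Ys)
  have hentry2 : ∀ (x : Fin m₁ × Fin n₁) (y : Fin m₂ × Fin n₂),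
      (R (A - ∑ k, (Xs k) ⊗ₖ (Ys k))) x y
        = (∑ j : Fin N, σ j * (u j x * v j y)) - ∑ k, Xs k x.1 x.2 * Ys k y.1 y.2 := by
    intro x y
    rw [map_sub, map_sum, hsvd, Matrix.sub_apply, Matrix.sum_apply, Matrix.sum_apply]
    have h1 : ∀ j : Fin N, (σ j • Matrix.of fun x y => u j x * v j y) x y
        = σ j * (u j x * v j y) := fun j => rfl
    have h2 : ∀ k : Fin r, (R ((Xs k) ⊗ₖ (Ys k))) x y = Xs k x.1 x.2 * Ys k y.1 y.2 :=
      fun k => by rw [hkron]; rfl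
    rw [Finset.sum_congr rfl fun j _ => h1 j, Finset.sum_congr rfl fun k _ => h2 k]
  -- apply the core inequality
  set u' : Fin N → EuclideanSpace ℝ (Fin m₁ × Fin n₁) := fun j => WithLp.toLp 2 (u j) with hu'def
  have hu' : Orthonormal ℝ u' := by
    rw [orthonormal_iff_ite]
    intro i j
    rw [eucl_inner]
    exact hu i j
  set x' : Fin r → EuclideanSpace ℝ (Fin m₁ × Fin n₁) :=
    fun k => WithLp.toLp 2 (fun p => Xs k p.1 p.2) with hx'def
  set y' : Fin r → Fin m₂ × Fin n₂ → ℝ := fun k q => Ys k q.1 q.2 with hy'def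
  have hcore := core_ineq σ u' v hσ hu' hv hσmono x' y'
  refine le_trans hcore (le_of_eq ?_)
  have hnorm : ∀ q : Fin m₂ × Fin n₂,
      ‖(∑ j, (σ j * v j q) • u' j) - ∑ k, y' k q • x' k‖ ^ 2
        = ∑ p, ((∑ j, σ j * v j q * u' j p) - ∑ k, y' k q * x' k p) ^ 2 := by
    intro q
    rw [eucl_norm_sq]
    refine Finset.sum_congr rfl fun p _ => ?_
    congr 1
    rw [PiLp.sub_apply]
    congr 1
    · rw [WithLp.ofLp_sum, Finset.sum_apply]
      exact Finset.sum_congr rfl fun j _ => by rw [PiLp.smul_apply]; rfl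
    · rw [WithLp.ofLp_sum, Finset.sum_apply]
      exact Finset.sum_congr rfl fun k _ => by rw [PiLp.smul_apply]; rfl
  calc ∑ q, ‖(∑ j, (σ j * v j q) • u' j) - ∑ k, y' k q • x' k‖ ^ 2
      = ∑ q, ∑ p, ((∑ j, σ j * v j q * u' j p) - ∑ k, y' k q * x' k p) ^ 2 :=
        Finset.sum_congr rfl fun q _ => hnorm q
    _ = ∑ p, ∑ q, ((∑ j, σ j * v j q * u' j p) - ∑ k, y' k q * x' k p) ^ 2 :=
        Finset.sum_comm
    _ = ∑ p, ∑ q, ((R (A - ∑ k, (Xs k) ⊗ₖ (Ys k))) p q) ^ 2 := by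
        refine Finset.sum_congr rfl fun p _ => Finset.sum_congr rfl fun q _ => ?_
        rw [hentry2]
        congr 1
        congr 1
        · exact Finset.sum_congr rfl fun j _ => by ring
        · exact Finset.sum_congr rfl fun k _ => by ring
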